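/- Let h be a 3-dimensional Lie subalgebra of g̃ with β^U([X,Y]) = 0 for all X,Y ∈ h. Then h is an ideal of g̃ (i.e., [g̃,h] ⊆ h) if and only if h = span{X₂+eT, X₃, U} for some e ∈ ℝ or h = span{X₃, T, U}. Moreover each of these ideals is abelian: all brackets of pairs of its elements vanish. -/

import Mathlib

noncomputable section

/-- The underlying space `ℝ⁵` of the Lie algebra `g̃`, with coordinates in the
basis `X₁, X₂, X₃, T, U`. -/
abbrev G5 : Type := ℝ × ℝ × ℝ × ℝ × ℝ

/-- The bracket of `g̃`. -/
def lb (X Y : G5) : G5 :=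
  (0, 0, X.1 * Y.2.1 - X.2.1 * Y.1, 0,
   -(X.1 * Y.2.2.1 - X.2.2.1 * Y.1) - (X.2.1 * Y.2.2.2.1 - X.2.2.2.1 * Y.2.1))

/-- `β^U : g̃ → ℝ` reads off the `U`-coefficient. -/
def βU (X : G5) : ℝ := X.2.2.2.2

def X2v : G5 := (0, 1, 0, 0, 0)
def X3v : G5 := (0, 0, 1, 0, 0)
def Tv : G5 := (0, 0, 0, 1, 0)
def Uv : G5 := (0, 0, 0, 0, 1)

lemma mem1 (e : ℝ) (Z : G5) :
    Z ∈ Submodule.span ℝ ({X2v + e • Tv, X3v, Uv} : Set G5) ↔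
      Z.1 = 0 ∧ Z.2.2.2.1 = e * Z.2.1 := by
  constructor
  · intro hZ
    induction hZ using Submodule.span_induction with
    | mem x hx =>
      rcases hx with h | h | h <;> subst h <;>
        simp [X2v, X3v, Tv, Uv, Prod.ext_iff]
    | zero => simp
    | add x y hx hy ihx ihy =>
      simp only [Prod.fst_add, Prod.snd_add] at *
      constructor <;> [skip; skip] <;> nlinarith [ihx.1, ihx.2, ihy.1, ihy.2]
    | smul c x hx ihx =>
      simp only [Prod.smul_fst, Prod.smul_snd, smul_eq_mul] at *
      exact ⟨by rw [ihx.1]; ring, by rw [ihx.2]; ring⟩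
  · rintro ⟨h1, h4⟩
    have hZ : Z = Z.2.1 • (X2v + e • Tv) + Z.2.2.1 • X3v + Z.2.2.2.2 • Uv := by
      obtain ⟨a, b, c, d, f⟩ := Z
      simp_all [X2v, X3v, Tv, Uv, Prod.ext_iff, mul_comm]
    rw [hZ]
    refine add_mem (add_mem (Submodule.smul_mem _ _ ?_) (Submodule.smul_mem _ _ ?_))
      (Submodule.smul_mem _ _ ?_) <;> apply Submodule.subset_span <;> simp

lemma mem2 (Z : G5) :
    Z ∈ Submodule.span ℝ ({X3v, Tv, Uv} : Set G5) ↔ Z.1 = 0 ∧ Z.2.1 = 0 := by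
  constructor
  · intro hZ
    induction hZ using Submodule.span_induction with
    | mem x hx =>
      rcases hx with h | h | h <;> subst h <;> simp [X3v, Tv, Uv, Prod.ext_iff]
    | zero => simp
    | add x y hx hy ihx ihy =>
      simp only [Prod.fst_add, Prod.snd_add] at *
      exact ⟨by rw [ihx.1, ihy.1]; ring, by rw [ihx.2, ihy.2]; ring⟩
    | smul c x hx ihx =>
      simp only [Prod.smul_fst, Prod.smul_snd, smul_eq_mul] at *
      exact ⟨by rw [ihx.1]; ring, by rw [ihx.2]; ring⟩
  · rintro ⟨h1, h2⟩
    have hZ : Z = Z.2.2.1 • X3v + Z.2.2.2.1 • Tv + Z.2.2.2.2 • Uv := by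
      obtain ⟨a, b, c, d, f⟩ := Z
      simp_all [X3v, Tv, Uv, Prod.ext_iff]
    rw [hZ]
    refine add_mem (add_mem (Submodule.smul_mem _ _ ?_) (Submodule.smul_mem _ _ ?_))
      (Submodule.smul_mem _ _ ?_) <;> apply Submodule.subset_span <;> simp

lemma finrank1 (e : ℝ) :
    Module.finrank ℝ (Submodule.span ℝ ({X2v + e • Tv, X3v, Uv} : Set G5)) ≤ 3 := by
  have : ({X2v + e • Tv, X3v, Uv} : Set G5)
      = (↑({X2v + e • Tv, X3v, Uv} : Finset G5) : Set G5) := by simp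
  rw [this]
  refine le_trans (finrank_span_finset_le_card _) ?_
  refine le_trans (Finset.card_insert_le _ _) ?_
  simp [Finset.card_insert_le]
  have hc := Finset.card_insert_le X3v ({Uv} : Finset G5); simp at hc; omega

lemma finrank2 :
    Module.finrank ℝ (Submodule.span ℝ ({X3v, Tv, Uv} : Set G5)) ≤ 3 := by
  have : ({X3v, Tv, Uv} : Set G5)
      = (↑({X3v, Tv, Uv} : Finset G5) : Set G5) := by simp
  rw [this]
  refine le_trans (finrank_span_finset_le_card _) ?_
  refine le_trans (Finset.card_insert_le _ _) ?_
  exact le_trans (by exact Nat.succ_le_succ (Finset.card_insert_le _ _)) (by simp)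

theorem stmt6 :
    (∀ h : Submodule ℝ G5,
      Module.finrank ℝ h = 3 → (∀ X ∈ h, ∀ Y ∈ h, lb X Y ∈ h) →
      (∀ X ∈ h, ∀ Y ∈ h, βU (lb X Y) = 0) →
      ((∀ X : G5, ∀ Y ∈ h, lb X Y ∈ h) ↔
        ((∃ e : ℝ, h = Submodule.span ℝ {X2v + e • Tv, X3v, Uv}) ∨
          h = Submodule.span ℝ {X3v, Tv, Uv}))) ∧
    (∀ e : ℝ, ∀ X ∈ Submodule.span ℝ ({X2v + e • Tv, X3v, Uv} : Set G5),
      ∀ Y ∈ Submodule.span ℝ ({X2v + e • Tv, X3v, Uv} : Set G5), lb X Y = 0) ∧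
    (∀ X ∈ Submodule.span ℝ ({X3v, Tv, Uv} : Set G5),
      ∀ Y ∈ Submodule.span ℝ ({X3v, Tv, Uv} : Set G5), lb X Y = 0) := by
  refine ⟨?_, ?_, ?_⟩
  · intro h hdim hsub hβ
    constructor
    · -- ideal → one of the two forms
      intro hid
      by_cases hcase : ∀ Y ∈ h, Y.1 = 0 ∧ Y.2.1 = 0
      · right
        have hle : h ≤ Submodule.span ℝ ({X3v, Tv, Uv} : Set G5) := by
          intro Z hZ; exact (mem2 Z).mpr (hcase Z hZ)
        exact Submodule.eq_of_le_of_finrank_le hle (by rw [hdim]; exact finrank2)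
      · left
        push_neg at hcase
        obtain ⟨Y, hY, hY12⟩ := hcase
        -- U ∈ h
        have hUmul1 : lb X3v Y = Y.1 • Uv := by
          simp [lb, X3v, Uv, Prod.ext_iff]
        have hUmul2 : lb Tv Y = Y.2.1 • Uv := by
          simp [lb, Tv, Uv, Prod.ext_iff]
        have hU : Uv ∈ h := by
          by_cases h1 : Y.1 = 0
          · have h2 : Y.2.1 ≠ 0 := by tauto
            have := hid Tv Y hY
            rw [hUmul2] at this
            have := h.smul_mem (Y.2.1)⁻¹ this
            rwa [smul_smul, inv_mul_cancel₀ h2, one_smul] at this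
          · have := hid X3v Y hY
            rw [hUmul1] at this
            have := h.smul_mem (Y.1)⁻¹ this
            rwa [smul_smul, inv_mul_cancel₀ h1, one_smul] at this
        -- X3 ∈ h
        have hX3 : X3v ∈ h := by
          by_cases h1 : Y.1 = 0
          · have h2 : Y.2.1 ≠ 0 := by tauto
            have hb : lb (1,0,0,0,0) Y = Y.2.1 • X3v + (-Y.2.2.1) • Uv := by
              simp [lb, X3v, Uv, Prod.ext_iff]
            have hm := hid (1,0,0,0,0) Y hY
            rw [hb] at hm
            have hm2 : (Y.2.1 : ℝ) • X3v ∈ h := by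
              have := h.add_mem hm (h.smul_mem (Y.2.2.1) hU)
              simpa [add_assoc, add_smul] using this
            have := h.smul_mem (Y.2.1)⁻¹ hm2
            rwa [smul_smul, inv_mul_cancel₀ h2, one_smul] at this
          · have hb : lb X2v Y = (-Y.1) • X3v + (-Y.2.2.2.1) • Uv := by
              simp [lb, X2v, X3v, Uv, Prod.ext_iff]
            have hm := hid X2v Y hY
            rw [hb] at hm
            have hm2 : ((-Y.1 : ℝ)) • X3v ∈ h := by
              have := h.add_mem hm (h.smul_mem (Y.2.2.2.1) hU)
              simpa [add_assoc, add_smul] using this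
            have := h.smul_mem (-Y.1)⁻¹ hm2
            rwa [smul_smul, inv_mul_cancel₀ (neg_ne_zero.mpr h1), one_smul] at this
        -- every element of h has first coordinate 0
        have hz1 : ∀ Z ∈ h, Z.1 = 0 := by
          intro Z hZ
          have := hβ Z hZ X3v hX3
          simp [βU, lb, X3v] at this
          linarith
        have hy1 : Y.1 = 0 := hz1 Y hY
        have hy2 : Y.2.1 ≠ 0 := by tauto
        refine ⟨Y.2.2.2.1 / Y.2.1, ?_⟩
        have hle : h ≤ Submodule.span ℝ
            ({X2v + (Y.2.2.2.1 / Y.2.1) • Tv, X3v, Uv} : Set G5) := by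
          intro Z hZ
          refine (mem1 _ Z).mpr ⟨hz1 Z hZ, ?_⟩
          have := hβ Z hZ Y hY
          simp [βU, lb, hz1 Z hZ, hy1] at this
          field_simp
          nlinarith [this]
        exact Submodule.eq_of_le_of_finrank_le hle (by rw [hdim]; exact finrank1 _)
    · -- the two forms are ideals
      rintro (⟨e, rfl⟩ | rfl) <;> intro X Y hY
      · obtain ⟨h1, h4⟩ := (mem1 e Y).mp hY
        refine (mem1 e _).mpr ⟨rfl, ?_⟩
        simp [lb]
      · obtain ⟨h1, h2⟩ := (mem2 Y).mp hY
        refine (mem2 _).mpr ⟨rfl, rfl⟩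
  · intro e X hX Y hY
    obtain ⟨hx1, hx4⟩ := (mem1 e X).mp hX
    obtain ⟨hy1, hy4⟩ := (mem1 e Y).mp hY
    simp [lb, hx1, hy1, hx4, hy4, Prod.ext_iff]
    ring
  · intro X hX Y hY
    obtain ⟨hx1, hx2⟩ := (mem2 X).mp hX
    obtain ⟨hy1, hy2⟩ := (mem2 Y).mp hY
    simp [lb, hx1, hy1, hx2, hy2, Prod.ext_iff]

end
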